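/- Let m ≥ 0 be an integer and r0 > 0 a real number. Then the integral ∫_0^{r0} J_{m+1/2}(r)² · r dr is positive, and the ratio (r0^{−1/2} · J_{m+1/2}(r0)) / √(∫_0^{r0} J_{m+1/2}(r)² · r dr) equals (√(2m+3) · r0^{−3/2} + I_1(m, r0)) / √(1 + I_2(m, r0)), where J_α is the Bessel function of the first kind defined by its power series. -/

import Mathlib

open Real

/-- Bessel function of the first kind, defined by its power series. -/
noncomputable def besselJ (α : ℝ) (x : ℝ) : ℝ :=
  ∑' k : ℕ,
    ((-1 : ℝ) ^ k / ((Nat.factorial k : ℝ) * Real.Gamma ((k : ℝ) + α + 1))) *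
      (x / 2) ^ (2 * (k : ℝ) + α)

/-- `I₁(m, r₀)` from the paper. -/
noncomputable def I1 (m : ℕ) (r0 : ℝ) : ℝ :=
  ∑' k : ℕ,
    ((-1 : ℝ) ^ (k + 1) * Real.Gamma ((m : ℝ) + 3 / 2) * Real.sqrt (2 * (m : ℝ) + 3) /
        ((Nat.factorial (k + 1) : ℝ) * Real.Gamma ((m : ℝ) + (k + 1 : ℕ) + 3 / 2))) *
      (r0 / 2) ^ (2 * (k + 1)) * r0 ^ (-(3 / 2) : ℝ)

/-- `I₂(m, r₀)` from the paper. -/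
noncomputable def I2 (m : ℕ) (r0 : ℝ) : ℝ :=
  ∑' k : ℕ,
    (-1 : ℝ) ^ (k + 1) * (r0 / 2) ^ (2 * (k + 1)) *
      ((2 * (m : ℝ) + 3) / (2 * (m : ℝ) + 2 * ((k : ℝ) + 1) + 3)) *
      ∑ p ∈ Finset.HasAntidiagonal.antidiagonal (k + 1),
        Real.Gamma ((m : ℝ) + 3 / 2) ^ 2 /
          ((Nat.factorial p.1 : ℝ) * (Nat.factorial p.2 : ℝ) *
            Real.Gamma ((m : ℝ) + (p.1 : ℝ) + 3 / 2) * Real.Gamma ((m : ℝ) + (p.2 : ℝ) + 3 / 2))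

namespace BesselAux

noncomputable def gg (m k : ℕ) : ℝ := Real.Gamma ((m : ℝ) + k + 3/2)

lemma gg_pos (m k : ℕ) : 0 < gg m k := Real.Gamma_pos_of_pos (by positivity)

lemma gg_zero (m : ℕ) : gg m 0 = Real.Gamma ((m : ℝ) + 3/2) := by
  rw [gg]; norm_num

lemma gg_succ (m k : ℕ) : gg m (k+1) = ((m : ℝ) + k + 3/2) * gg m k := by
  have h : ((m : ℝ) + (k+1 : ℕ) + 3/2) = ((m : ℝ) + k + 3/2) + 1 := by push_cast; ring
  rw [gg, h, Real.Gamma_add_one (by positivity), gg]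

lemma gg_le (m k : ℕ) : gg m 0 ≤ gg m k := by
  induction k with
  | zero => exact le_refl _
  | succ k ih =>
      rw [gg_succ]
      nlinarith [gg_pos m k, (Nat.cast_nonneg m : (0:ℝ) ≤ m), (Nat.cast_nonneg k : (0:ℝ) ≤ k)]

noncomputable def bA (m k : ℕ) : ℝ := (-1)^k * gg m 0 / ((k.factorial : ℝ) * gg m k)

lemma bA_zero (m : ℕ) : bA m 0 = 1 := by
  simp [bA, (gg_pos m 0).ne']

lemma abs_bA_le (m k : ℕ) : |bA m k| ≤ 1 / (k.factorial : ℝ) := by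
  have h1 := gg_pos m 0
  have h2 := gg_pos m k
  have h3 : (0:ℝ) < k.factorial := by positivity
  rw [bA, abs_div, abs_mul, abs_pow, abs_neg, abs_one, one_pow, one_mul, abs_mul,
    abs_of_pos h1, abs_of_pos h2, abs_of_pos h3]
  rw [div_le_div_iff₀ (by positivity) (by positivity)]
  nlinarith [gg_le m k]

lemma summable_bA_norm (m : ℕ) (y : ℝ) : Summable (fun k => ‖bA m k * y ^ k‖) := by
  apply Summable.of_nonneg_of_le (fun k => norm_nonneg _) (fun k => ?_)
    ((Real.summable_pow_div_factorial |y|))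
  rw [norm_mul, norm_pow, Real.norm_eq_abs, Real.norm_eq_abs]
  calc |bA m k| * |y|^k ≤ (1 / k.factorial) * |y|^k := by
        apply mul_le_mul_of_nonneg_right (abs_bA_le m k) (by positivity)
    _ = |y|^k / k.factorial := by ring

lemma summable_bA (m : ℕ) (y : ℝ) : Summable (fun k => bA m k * y ^ k) :=
  (summable_bA_norm m y).of_norm

noncomputable def hfun (m : ℕ) (r : ℝ) : ℝ := ∑' k : ℕ, bA m k * ((r/2)^2) ^ k

lemma besselJ_eq (m : ℕ) {x : ℝ} (hx : 0 < x) :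
    besselJ ((m : ℝ) + 1/2) x
      = (x/2) ^ (((m : ℝ) + 1/2)) / gg m 0 * hfun m x := by
  have hx2 : (0:ℝ) < x / 2 := by linarith
  rw [besselJ, hfun, ← tsum_mul_left]
  apply tsum_congr
  intro k
  have hg : Real.Gamma ((k : ℝ) + ((m : ℝ) + 1/2) + 1) = gg m k := by
    rw [gg]; ring_nf
  have hpow : (x / 2) ^ (2 * (k : ℝ) + ((m : ℝ) + 1/2))
      = ((x/2)^2) ^ k * (x/2) ^ (((m : ℝ) + 1/2)) := by
    rw [show 2 * (k : ℝ) + ((m : ℝ) + 1/2) = ((2*k : ℕ) : ℝ) + ((m : ℝ) + 1/2) by push_cast; ring,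
      Real.rpow_add hx2, Real.rpow_natCast, pow_mul]
  rw [hg, hpow, bA]
  have h1 : gg m k ≠ 0 := (gg_pos m k).ne'
  have h2 : gg m 0 ≠ 0 := (gg_pos m 0).ne'
  have h3 : ((k.factorial : ℝ)) ≠ 0 := by positivity
  field_simp

lemma hfun_eq_one_add (m : ℕ) (r : ℝ) :
    hfun m r = 1 + ∑' k : ℕ, bA m (k+1) * ((r/2)^2) ^ (k+1) := by
  rw [hfun, Summable.tsum_eq_zero_add (summable_bA m ((r/2)^2))]
  rw [bA_zero, pow_zero, mul_one]

noncomputable def bB (m n : ℕ) : ℝ := ∑ p ∈ Finset.HasAntidiagonal.antidiagonal n, bA m p.1 * bA m p.2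

lemma bB_zero (m : ℕ) : bB m 0 = 1 := by
  simp [bB, bA_zero]

lemma sum_antidiagonal_inv_factorial (n : ℕ) :
    ∑ p ∈ Finset.HasAntidiagonal.antidiagonal n, (1:ℝ) / (p.1.factorial * p.2.factorial)
      = 2^n / n.factorial := by
  rw [Finset.Nat.sum_antidiagonal_eq_sum_range_succ_mk]
  have : ∀ i ∈ Finset.range (n+1),
      (1:ℝ) / (i.factorial * (n-i).factorial) = (n.choose i : ℝ) / n.factorial := by
    intro i hi
    have hi' : i ≤ n := Nat.lt_succ_iff.mp (Finset.mem_range.mp hi)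
    rw [div_eq_div_iff (by positivity) (by positivity), one_mul, ← mul_assoc]
    exact_mod_cast (Nat.choose_mul_factorial_mul_factorial hi').symm
  rw [Finset.sum_congr rfl this, ← Finset.sum_div, ← Nat.cast_sum, Nat.sum_range_choose]
  push_cast
  ring

lemma abs_bB_le (m n : ℕ) : |bB m n| ≤ 2^n / n.factorial := by
  calc |bB m n| ≤ ∑ p ∈ Finset.HasAntidiagonal.antidiagonal n, |bA m p.1 * bA m p.2| :=
        Finset.abs_sum_le_sum_abs _ _
    _ ≤ ∑ p ∈ Finset.HasAntidiagonal.antidiagonal n, (1:ℝ) / (p.1.factorial * p.2.factorial) := by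
        apply Finset.sum_le_sum
        intro p _
        rw [abs_mul, one_div, mul_inv]
        have := abs_bA_le m p.1
        have := abs_bA_le m p.2
        have h1 : (0:ℝ) ≤ |bA m p.1| := abs_nonneg _
        have h2 : (0:ℝ) ≤ |bA m p.2| := abs_nonneg _
        calc |bA m p.1| * |bA m p.2| ≤ (1/p.1.factorial) * (1/p.2.factorial) := by
              apply mul_le_mul (abs_bA_le m p.1) (abs_bA_le m p.2) h2 (by positivity)
          _ = ((p.1.factorial : ℝ))⁻¹ * ((p.2.factorial : ℝ))⁻¹ := by
              rw [one_div, one_div]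
    _ = 2^n / n.factorial := sum_antidiagonal_inv_factorial n

lemma summable_bB_norm (m : ℕ) (y : ℝ) : Summable (fun n => ‖bB m n * y ^ n‖) := by
  apply Summable.of_nonneg_of_le (fun k => norm_nonneg _) (fun n => ?_)
    ((Real.summable_pow_div_factorial (2*|y|)))
  rw [norm_mul, norm_pow, Real.norm_eq_abs, Real.norm_eq_abs]
  calc |bB m n| * |y|^n ≤ (2^n / n.factorial) * |y|^n := by
        apply mul_le_mul_of_nonneg_right (abs_bB_le m n) (by positivity)
    _ = (2*|y|)^n / n.factorial := by rw [mul_pow]; ring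

lemma summable_bB (m : ℕ) (y : ℝ) : Summable (fun n => bB m n * y ^ n) :=
  (summable_bB_norm m y).of_norm

lemma hfun_sq (m : ℕ) (r : ℝ) :
    hfun m r ^ 2 = ∑' n : ℕ, bB m n * ((r/2)^2) ^ n := by
  rw [sq, hfun,
    tsum_mul_tsum_eq_tsum_sum_antidiagonal_of_summable_norm
      (summable_bA_norm m ((r/2)^2)) (summable_bA_norm m ((r/2)^2))]
  apply tsum_congr
  intro n
  rw [bB, Finset.sum_mul]
  apply Finset.sum_congr rfl
  intro p hp
  have hpn : p.1 + p.2 = n := Finset.HasAntidiagonal.mem_antidiagonal.mp hp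
  rw [← hpn, pow_add]
  ring

noncomputable def cC (m n : ℕ) : ℝ := bB m n / (gg m 0^2 * 2^(2*n+2*m+1))

noncomputable def Ffun (m : ℕ) (r : ℝ) : ℝ := ∑' n : ℕ, cC m n * r ^ (2*n+2*m+2)

lemma F_term_norm (m : ℕ) (r : ℝ) (n : ℕ) :
    ‖cC m n * r ^ (2*n+2*m+2)‖
      = ‖bB m n * ((r/2)^2) ^ n‖ * (|r|^(2*m+2) / (gg m 0^2 * 2^(2*m+1))) := by
  have hg : (0:ℝ) < gg m 0 := gg_pos m 0
  have e1 : ‖bB m n * ((r/2)^2) ^ n‖ = |bB m n| * ((r/2)^2) ^ n := by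
    rw [norm_mul, Real.norm_eq_abs, Real.norm_eq_abs]
    congr 1
    exact abs_of_nonneg (by positivity)
  have e2 : ‖cC m n * r ^ (2*n+2*m+2)‖
      = |bB m n| / (gg m 0^2 * 2^(2*n+2*m+1)) * |r| ^ (2*n+2*m+2) := by
    rw [norm_mul, Real.norm_eq_abs, Real.norm_eq_abs, cC, abs_div,
      abs_of_pos (show (0:ℝ) < gg m 0^2 * 2^(2*n+2*m+1) by positivity), abs_pow]
  have h2 : (((r/2):ℝ)^2) ^ n = |r|^(2*n) / 4^n := by
    calc (((r/2):ℝ)^2) ^ n = ((|r|^2)/(4:ℝ)) ^ n := by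
          rw [div_pow r 2 2, sq_abs]; norm_num
      _ = |r|^(2*n) / 4^n := by rw [div_pow, ← pow_mul]
  have h3 : |r|^(2*n+2*m+2) = |r|^(2*n) * |r|^(2*m+2) := by
    rw [show 2*n+2*m+2 = 2*n+(2*m+2) by omega, pow_add]
  have h4 : (2:ℝ)^(2*n+2*m+1) = 4^n * 2^(2*m+1) := by
    rw [show 2*n+2*m+1 = 2*n+(2*m+1) by omega, pow_add,
      show (4:ℝ) = 2^2 by norm_num, ← pow_mul]
  rw [e1, e2, h2, h3, h4]
  have h5 : ((4:ℝ))^n ≠ 0 := by positivity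
  field_simp

lemma summable_F_norm (m : ℕ) (r : ℝ) :
    Summable (fun n => ‖cC m n * r ^ (2*n+2*m+2)‖) := by
  apply Summable.congr (((summable_bB_norm m ((r/2)^2)).mul_right
    (|r|^(2*m+2) / (gg m 0^2 * 2^(2*m+1)))))
  intro n
  exact (F_term_norm m r n).symm

lemma summable_F (m : ℕ) (r : ℝ) : Summable (fun n => cC m n * r ^ (2*n+2*m+2)) :=
  (summable_F_norm m r).of_norm

lemma Ffun_eq (m : ℕ) (r : ℝ) :
    Ffun m r = (r/2)^(2*m+1) * r * hfun m r ^ 2 / gg m 0^2 := by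
  rw [hfun_sq]
  have : (r/2)^(2*m+1) * r * (∑' n : ℕ, bB m n * ((r/2)^2) ^ n) / gg m 0^2
      = ∑' n : ℕ, (bB m n * ((r/2)^2) ^ n) * ((r/2)^(2*m+1) * r / gg m 0^2) := by
    rw [tsum_mul_right]; ring
  rw [this, Ffun]
  apply tsum_congr
  intro n
  have hg : gg m 0 ≠ 0 := (gg_pos m 0).ne'
  rw [cC]
  rw [show ((r/2)^2 : ℝ)^n = r^(2*n)/2^(2*n) by rw [div_pow r 2 2, div_pow, ← pow_mul, ← pow_mul],
    show ((r/2) : ℝ)^(2*m+1) = r^(2*m+1)/2^(2*m+1) by rw [div_pow]]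
  field_simp
  ring

lemma measurable_Ffun (m : ℕ) : Measurable (Ffun m) := by
  have hlim : ∀ r : ℝ, Filter.Tendsto (fun N => ∑ n ∈ Finset.range N, cC m n * r ^ (2*n+2*m+2))
      Filter.atTop (nhds (Ffun m r)) := fun r =>
    (summable_F m r).hasSum.tendsto_sum_nat
  exact measurable_of_tendsto_metrizable
    (fun N => by measurability) (tendsto_pi_nhds.mpr hlim)

open MeasureTheory in
lemma integrable_F_term (m n : ℕ) (r0 : ℝ) :
    IntegrableOn (fun r : ℝ => cC m n * r ^ (2*n+2*m+2)) (Set.Ioc 0 r0) := by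
  apply Continuous.integrableOn_Ioc
  continuity

open MeasureTheory in
lemma integrableOn_Ffun (m : ℕ) {r0 : ℝ} (hr0 : 0 < r0) :
    IntegrableOn (Ffun m) (Set.Ioc 0 r0) := by
  set M : ℝ := ∑' n : ℕ, ‖cC m n * r0 ^ (2*n+2*m+2)‖ with hM
  apply Integrable.mono' (integrable_const M)
    ((measurable_Ffun m).aestronglyMeasurable.restrict)
  filter_upwards [ae_restrict_mem measurableSet_Ioc] with r hr
  calc ‖Ffun m r‖ ≤ ∑' n : ℕ, ‖cC m n * r ^ (2*n+2*m+2)‖ :=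
        norm_tsum_le_tsum_norm (summable_F_norm m r)
    _ ≤ M := by
        apply Summable.tsum_le_tsum _ (summable_F_norm m r) (summable_F_norm m r0)
        intro n
        rw [norm_mul, norm_mul]
        apply mul_le_mul_of_nonneg_left _ (norm_nonneg _)
        rw [norm_pow, norm_pow, Real.norm_eq_abs, Real.norm_eq_abs,
          abs_of_pos hr.1, abs_of_pos hr0]
        exact pow_le_pow_left₀ hr.1.le hr.2 _

open MeasureTheory in
lemma integral_F_term (m n : ℕ) {r0 : ℝ} (hr0 : 0 < r0) :
    ∫ r in Set.Ioc (0:ℝ) r0, cC m n * r ^ (2*n+2*m+2)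
      = cC m n * r0 ^ (2*n+2*m+3) / (2*(n:ℝ)+2*(m:ℝ)+3) := by
  rw [← intervalIntegral.integral_of_le hr0.le, intervalIntegral.integral_const_mul,
    integral_pow]
  rw [zero_pow (by omega : 2*n+2*m+2+1 ≠ 0)]
  push_cast
  ring

open MeasureTheory in
lemma integral_Ffun (m : ℕ) {r0 : ℝ} (hr0 : 0 < r0) :
    ∫ r in Set.Ioc (0:ℝ) r0, Ffun m r
      = ∑' n : ℕ, cC m n * r0 ^ (2*n+2*m+3) / (2*(n:ℝ)+2*(m:ℝ)+3) := by
  have hswap := integral_tsum_of_summable_integral_norm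
    (F := fun n (r : ℝ) => cC m n * r ^ (2*n+2*m+2))
    (μ := volume.restrict (Set.Ioc (0:ℝ) r0))
    (fun n => integrable_F_term m n r0) ?_
  · have h2 : ∫ r in Set.Ioc (0:ℝ) r0, Ffun m r
        = ∑' (i : ℕ), ∫ a in Set.Ioc (0:ℝ) r0, cC m i * a ^ (2*i+2*m+2) := hswap.symm
    rw [h2]
    apply tsum_congr
    intro n
    exact integral_F_term m n hr0
  · apply Summable.of_nonneg_of_le
      (fun n => integral_nonneg (fun r => norm_nonneg _))
      (fun n => ?_) (((summable_F_norm m r0).mul_right r0))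
    have hb : ∀ r ∈ Set.Ioc (0:ℝ) r0,
        ‖cC m n * r ^ (2*n+2*m+2)‖ ≤ ‖cC m n * r0 ^ (2*n+2*m+2)‖ := by
      intro r hr
      rw [norm_mul, norm_mul]
      apply mul_le_mul_of_nonneg_left _ (norm_nonneg _)
      rw [norm_pow, norm_pow, Real.norm_eq_abs, Real.norm_eq_abs,
        abs_of_pos hr.1, abs_of_pos hr0]
      exact pow_le_pow_left₀ hr.1.le hr.2 _
    calc ∫ r in Set.Ioc (0:ℝ) r0, ‖cC m n * r ^ (2*n+2*m+2)‖
        ≤ ∫ _ in Set.Ioc (0:ℝ) r0, ‖cC m n * r0 ^ (2*n+2*m+2)‖ := by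
          apply setIntegral_mono_on (integrable_F_term m n r0).norm
            (integrableOn_const measure_Ioc_lt_top.ne) measurableSet_Ioc hb
      _ = ‖cC m n * r0 ^ (2*n+2*m+2)‖ * r0 := by
          rw [setIntegral_const, measureReal_def, Real.volume_Ioc, smul_eq_mul,
            ENNReal.toReal_ofReal (by linarith), sub_zero, mul_comm]

lemma hfun_pos (m : ℕ) {r : ℝ} (h0 : 0 ≤ r) (h1 : r ≤ 1) : 0 < hfun m r := by
  set y : ℝ := (r/2)^2 with hy
  have hy0 : 0 ≤ y := by positivity
  have hy4 : y ≤ 1/4 := by rw [hy]; nlinarith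
  have hsum : Summable (fun k : ℕ => ‖bA m (k+1) * y ^ (k+1)‖) :=
    (summable_bA_norm m y).comp_injective (add_left_injective 1)
  have htail : |∑' k : ℕ, bA m (k+1) * y ^ (k+1)| ≤ 1/3 := by
    have h1' : |∑' k : ℕ, bA m (k+1) * y ^ (k+1)|
        ≤ ∑' k : ℕ, ‖bA m (k+1) * y ^ (k+1)‖ := by
      rw [← Real.norm_eq_abs]
      exact norm_tsum_le_tsum_norm hsum
    have h2' : ∑' k : ℕ, ‖bA m (k+1) * y ^ (k+1)‖ ≤ ∑' k : ℕ, ((1:ℝ)/4) ^ (k+1) := by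
      apply Summable.tsum_le_tsum _ hsum
      · apply Summable.comp_injective _ (add_left_injective 1)
        exact summable_geometric_of_lt_one (by norm_num) (by norm_num)
      · intro k
        rw [norm_mul, Real.norm_eq_abs, Real.norm_eq_abs, abs_of_nonneg (pow_nonneg hy0 _)]
        calc |bA m (k+1)| * y^(k+1) ≤ 1 * ((1:ℝ)/4)^(k+1) := by
              apply mul_le_mul _ (pow_le_pow_left₀ hy0 hy4 _) (pow_nonneg hy0 _) zero_le_one
              calc |bA m (k+1)| ≤ 1 / (k+1).factorial := abs_bA_le m (k+1)
                _ ≤ 1 := by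
                    rw [div_le_one (by positivity)]
                    exact_mod_cast Nat.one_le_iff_ne_zero.mpr (Nat.factorial_ne_zero _)
          _ = ((1:ℝ)/4)^(k+1) := one_mul _
    have h3' : ∑' k : ℕ, ((1:ℝ)/4) ^ (k+1) = 1/3 := by
      have : ∀ k : ℕ, ((1:ℝ)/4) ^ (k+1) = ((1:ℝ)/4)^k * (1/4) := fun k => pow_succ _ _
      rw [tsum_congr this, tsum_mul_right, tsum_geometric_of_lt_one (by norm_num) (by norm_num)]
      norm_num
    linarith [h1', h2', h3'.le, h3'.ge]
  have := hfun_eq_one_add m r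
  rw [this]
  have := abs_le.mp htail
  linarith [this.1]

open MeasureTheory in
lemma integral_Ffun_pos (m : ℕ) {r0 : ℝ} (hr0 : 0 < r0) :
    0 < ∫ r in Set.Ioc (0:ℝ) r0, Ffun m r := by
  rw [setIntegral_pos_iff_support_of_nonneg_ae ?_ (integrableOn_Ffun m hr0)]
  · apply lt_of_lt_of_le _ (measure_mono (show Set.Ioc 0 (min 1 r0) ⊆
      Function.support (Ffun m) ∩ Set.Ioc 0 r0 from ?_))
    · rw [Real.volume_Ioc]
      simp only [ENNReal.ofReal_pos]
      have : 0 < min 1 r0 := lt_min one_pos hr0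
      linarith
    · intro r hr
      have hr1 : 0 < r := hr.1
      have hr2 : r ≤ 1 := hr.2.trans (min_le_left _ _)
      have hr3 : r ≤ r0 := hr.2.trans (min_le_right _ _)
      constructor
      · show Ffun m r ≠ 0
        rw [Ffun_eq]
        have h1 := hfun_pos m hr1.le hr2
        have h2 := gg_pos m 0
        positivity
      · exact ⟨hr1, hr3⟩
  · filter_upwards [ae_restrict_mem measurableSet_Ioc] with r hr
    rw [Ffun_eq]
    have h2 := gg_pos m 0
    have := hr.1
    positivity

lemma summable_t (m : ℕ) (r0 : ℝ) :
    Summable (fun n : ℕ => bB m n * ((r0/2)^2)^n * ((2*(m:ℝ)+3)/(2*(n:ℝ)+2*(m:ℝ)+3))) := by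
  apply Summable.of_norm
  apply Summable.of_nonneg_of_le (fun n => norm_nonneg _) (fun n => ?_)
    (summable_bB_norm m ((r0/2)^2))
  rw [norm_mul]
  have hq : ‖(2*(m:ℝ)+3)/(2*(n:ℝ)+2*(m:ℝ)+3)‖ ≤ 1 := by
    rw [Real.norm_eq_abs, abs_of_pos (by positivity), div_le_one (by positivity)]
    have : (0:ℝ) ≤ (n:ℝ) := Nat.cast_nonneg n
    linarith
  calc ‖bB m n * ((r0/2)^2)^n‖ * ‖(2*(m:ℝ)+3)/(2*(n:ℝ)+2*(m:ℝ)+3)‖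
      ≤ ‖bB m n * ((r0/2)^2)^n‖ * 1 := mul_le_mul_of_nonneg_left hq (norm_nonneg _)
    _ = ‖bB m n * ((r0/2)^2)^n‖ := mul_one _

lemma one_add_I2 (m : ℕ) (r0 : ℝ) :
    1 + I2 m r0
      = ∑' n : ℕ, bB m n * ((r0/2)^2)^n * ((2*(m:ℝ)+3)/(2*(n:ℝ)+2*(m:ℝ)+3)) := by
  rw [Summable.tsum_eq_zero_add (summable_t m r0)]
  congr 1
  · rw [bB_zero, pow_zero]
    norm_num
    rw [div_self (by positivity : (2*(m:ℝ)+3) ≠ 0)]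
  · rw [I2]
    apply tsum_congr
    intro k
    have hneg : ((-1:ℝ))^(k+1) * (-1:ℝ)^(k+1) = 1 := by
      rw [← pow_add]
      exact Even.neg_one_pow ⟨k+1, by ring⟩
    have hinner : (∑ p ∈ Finset.HasAntidiagonal.antidiagonal (k + 1),
        Real.Gamma ((m : ℝ) + 3 / 2) ^ 2 /
          ((Nat.factorial p.1 : ℝ) * (Nat.factorial p.2 : ℝ) *
            Real.Gamma ((m : ℝ) + (p.1 : ℝ) + 3 / 2) * Real.Gamma ((m : ℝ) + (p.2 : ℝ) + 3 / 2)))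
        = (-1:ℝ)^(k+1) * bB m (k+1) := by
      rw [bB, Finset.mul_sum]
      apply Finset.sum_congr rfl
      intro p hp
      have hpn : p.1 + p.2 = k + 1 := Finset.HasAntidiagonal.mem_antidiagonal.mp hp
      have hsign : ((-1:ℝ))^(p.1) * (-1:ℝ)^(p.2) = (-1:ℝ)^(k+1) := by
        rw [← pow_add, hpn]
      have e1 : Real.Gamma ((m:ℝ) + (p.1 : ℝ) + 3/2) = gg m p.1 := rfl
      have e2 : Real.Gamma ((m:ℝ) + (p.2 : ℝ) + 3/2) = gg m p.2 := rfl
      have key : bA m p.1 * bA m p.2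
          = ((-1:ℝ)^p.1 * (-1:ℝ)^p.2) * (gg m 0^2 /
            ((p.1.factorial : ℝ) * (p.2.factorial : ℝ) * gg m p.1 * gg m p.2)) := by
        rw [bA, bA]; ring
      rw [e1, e2, ← gg_zero, key, hsign, ← mul_assoc, hneg, one_mul]
    rw [hinner]
    have hcast : 2*(m:ℝ) + 2*((k:ℝ)+1) + 3 = 2*(((k+1:ℕ)):ℝ) + 2*(m:ℝ) + 3 := by
      push_cast; ring
    rw [hcast, show (r0/2)^(2*(k+1)) = ((r0/2)^2)^(k+1) from pow_mul (r0/2) 2 (k+1)]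
    linear_combination (((r0/2)^2)^(k+1) * ((2*(m:ℝ)+3)/(2*(((k+1:ℕ)):ℝ)+2*(m:ℝ)+3))
      * bB m (k+1)) * hneg

lemma I1_eq (m : ℕ) (r0 : ℝ) :
    I1 m r0 = (∑' k : ℕ, bA m (k+1) * ((r0/2)^2)^(k+1))
      * (Real.sqrt (2*(m:ℝ)+3) * r0 ^ (-(3/2) : ℝ)) := by
  rw [I1, ← tsum_mul_right]
  apply tsum_congr
  intro k
  have e1 : Real.Gamma ((m:ℝ) + ((k+1 : ℕ) : ℝ) + 3/2) = gg m (k+1) := rfl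
  rw [e1, ← gg_zero, bA,
    show (r0/2)^(2*(k+1)) = ((r0/2)^2)^(k+1) from pow_mul (r0/2) 2 (k+1)]
  ring

lemma tsum_int_eq (m : ℕ) (r0 : ℝ) :
    ∑' n : ℕ, cC m n * r0 ^ (2*n+2*m+3) / (2*(n:ℝ)+2*(m:ℝ)+3)
      = (r0^(2*m+3) / (2^(2*m+1) * gg m 0^2 * (2*(m:ℝ)+3)))
        * ∑' n : ℕ, bB m n * ((r0/2)^2)^n * ((2*(m:ℝ)+3)/(2*(n:ℝ)+2*(m:ℝ)+3)) := by
  rw [← tsum_mul_left]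
  apply tsum_congr
  intro n
  rw [cC]
  have h1 : (2*(n:ℝ)+2*(m:ℝ)+3) ≠ 0 := by positivity
  have h2 : gg m 0 ≠ 0 := (gg_pos m 0).ne'
  have h3 : ((r0/2)^2 : ℝ)^n = r0^(2*n)/2^(2*n) := by
    rw [div_pow r0 2 2, div_pow, ← pow_mul, ← pow_mul]
  have h4 : r0^(2*n+2*m+3) = r0^(2*n) * r0^(2*m+3) := by
    rw [show 2*n+2*m+3 = 2*n+(2*m+3) by omega, pow_add]
  have h5 : (2:ℝ)^(2*n+2*m+1) = 2^(2*n) * 2^(2*m+1) := by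
    rw [show 2*n+2*m+1 = 2*n+(2*m+1) by omega, pow_add]
  rw [h3, h4, h5]
  have h6 : ((2:ℝ))^(2*n) ≠ 0 := by positivity
  have h7 : ((2:ℝ))^(2*m+1) ≠ 0 := by positivity
  field_simp

end BesselAux

open BesselAux in
theorem besselJ_ratio_eq (m : ℕ) (r0 : ℝ) (hr0 : 0 < r0) :
    0 < ∫ r in (0 : ℝ)..r0, besselJ ((m : ℝ) + 1 / 2) r ^ 2 * r ∧
    r0 ^ (-(1 / 2) : ℝ) * besselJ ((m : ℝ) + 1 / 2) r0 /
        Real.sqrt (∫ r in (0 : ℝ)..r0, besselJ ((m : ℝ) + 1 / 2) r ^ 2 * r) =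
      (Real.sqrt (2 * (m : ℝ) + 3) * r0 ^ (-(3 / 2) : ℝ) + I1 m r0) /
        Real.sqrt (1 + I2 m r0) := by
  have hgg : (0:ℝ) < gg m 0 := gg_pos m 0
  have hK : (0:ℝ) < (r0/2) ^ (((m:ℝ)+1/2)) := Real.rpow_pos_of_pos (by linarith) _
  have hsg : (0:ℝ) < Real.sqrt (2*(m:ℝ)+3) := Real.sqrt_pos.mpr (by positivity)
  -- the interval integral equals the Ioc integral of Ffun
  have hint : (∫ r in (0:ℝ)..r0, besselJ ((m : ℝ) + 1 / 2) r ^ 2 * r)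
      = ∫ r in Set.Ioc (0:ℝ) r0, Ffun m r := by
    rw [intervalIntegral.integral_of_le hr0.le]
    apply MeasureTheory.setIntegral_congr_fun measurableSet_Ioc
    intro r hr
    have hrpos : 0 < r := hr.1
    show besselJ ((m : ℝ) + 1 / 2) r ^ 2 * r = Ffun m r
    rw [besselJ_eq m hrpos, Ffun_eq]
    have hsq : ((r/2:ℝ) ^ (((m:ℝ)+1/2)))^2 = (r/2)^(2*m+1) := by
      rw [← Real.rpow_natCast ((r/2:ℝ) ^ (((m:ℝ)+1/2))) 2,
        ← Real.rpow_mul (by linarith : (0:ℝ) ≤ r/2),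
        show ((m:ℝ)+1/2) * ((2:ℕ):ℝ) = ((2*m+1 : ℕ):ℝ) by push_cast; ring,
        Real.rpow_natCast]
    rw [mul_pow, div_pow, hsq]
    have hg : gg m 0 ≠ 0 := hgg.ne'
    field_simp
  have hTval : ∫ r in Set.Ioc (0:ℝ) r0, Ffun m r
      = (r0^(2*m+3) / (2^(2*m+1) * gg m 0^2 * (2*(m:ℝ)+3))) * (1 + I2 m r0) := by
    rw [integral_Ffun m hr0, tsum_int_eq m r0, ← one_add_I2 m r0]
  have hpos := integral_Ffun_pos m hr0
  refine ⟨by rw [hint]; exact hpos, ?_⟩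
  have hKc_pos : (0:ℝ) < r0^(2*m+3) / (2^(2*m+1) * gg m 0^2 * (2*(m:ℝ)+3)) := by positivity
  have hI2pos : 0 < 1 + I2 m r0 := by
    have h0 : 0 < (r0^(2*m+3) / (2^(2*m+1) * gg m 0^2 * (2*(m:ℝ)+3))) * (1 + I2 m r0) :=
      hTval ▸ hpos
    nlinarith [hKc_pos, h0]
  -- numerator identity
  have hnum : Real.sqrt (2*(m:ℝ)+3) * r0 ^ (-(3/2) : ℝ) + I1 m r0
      = Real.sqrt (2*(m:ℝ)+3) * r0 ^ (-(3/2) : ℝ) * hfun m r0 := by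
    rw [I1_eq, hfun_eq_one_add m r0]
    ring
  -- sqrt of the integral
  have hsqK : (((r0/2:ℝ)) ^ (((m:ℝ)+1/2)))^2 = (r0/2)^(2*m+1) := by
    rw [← Real.rpow_natCast ((r0/2:ℝ) ^ (((m:ℝ)+1/2))) 2,
      ← Real.rpow_mul (by linarith : (0:ℝ) ≤ r0/2),
      show ((m:ℝ)+1/2) * ((2:ℕ):ℝ) = ((2*m+1 : ℕ):ℝ) by push_cast; ring,
      Real.rpow_natCast]
  have hKc_eq : r0^(2*m+3) / (2^(2*m+1) * gg m 0^2 * (2*(m:ℝ)+3))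
      = ((r0/2) ^ (((m:ℝ)+1/2)) * r0 / (gg m 0 * Real.sqrt (2*(m:ℝ)+3)))^2 := by
    have hs : Real.sqrt (2*(m:ℝ)+3)^2 = 2*(m:ℝ)+3 := Real.sq_sqrt (by positivity)
    rw [div_pow, mul_pow, mul_pow, hsqK, hs,
      show ((r0/2:ℝ))^(2*m+1) = r0^(2*m+1)/2^(2*m+1) by rw [div_pow]]
    have h1 : gg m 0 ≠ 0 := hgg.ne'
    have h2 : ((2:ℝ))^(2*m+1) ≠ 0 := by positivity
    have h3 : (2*(m:ℝ)+3) ≠ 0 := by positivity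
    field_simp
    ring
  have hsqrtT : Real.sqrt (∫ r in (0:ℝ)..r0, besselJ ((m : ℝ) + 1 / 2) r ^ 2 * r)
      = ((r0/2) ^ (((m:ℝ)+1/2)) * r0 / (gg m 0 * Real.sqrt (2*(m:ℝ)+3)))
        * Real.sqrt (1 + I2 m r0) := by
    rw [hint, hTval, hKc_eq, Real.sqrt_mul (sq_nonneg _) (1 + I2 m r0),
      Real.sqrt_sq (by positivity :
        (0:ℝ) ≤ (r0/2) ^ (((m:ℝ)+1/2)) * r0 / (gg m 0 * Real.sqrt (2*(m:ℝ)+3)))]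
  rw [hsqrtT, besselJ_eq m hr0, hnum]
  have hr032 : r0 ^ (-(3/2) : ℝ) = r0 ^ (-(1/2) : ℝ) / r0 := by
    rw [eq_div_iff hr0.ne']
    rw [show r0 ^ (-(1/2) : ℝ) = r0 ^ ((-(3/2) : ℝ) + 1) by norm_num]
    rw [Real.rpow_add hr0, Real.rpow_one]
  rw [hr032]
  have hSS : Real.sqrt (1 + I2 m r0) ≠ 0 := (Real.sqrt_pos.mpr hI2pos).ne'
  have hg : gg m 0 ≠ 0 := hgg.ne'
  have hKne : ((r0/2:ℝ)) ^ (((m:ℝ)+1/2)) ≠ 0 := hK.ne'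
  field_simp
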